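/- Let e = e_1 ⊗ … ⊗ e_r and f = f_1 ⊗ … ⊗ f_s be in T(V*) with s ≥ 1, and γ a bounded variation path. Then ∫∫_{s<u_1<u_2<t} dX^{e}_{s,u_1} dX^{f}_{s,u_2} = X^{(e ⧢ f̃) ⊗ f_s}_{s,t}, where f̃ = f_1 ⊗ … ⊗ f_{s−1}. In particular, any iterated integral of coordinate iterated integrals of γ is itself a coordinate iterated integral of γ. -/

import Mathlib

open MeasureTheory intervalIntegral

/-- All shuffles (interleavings) of two words, with multiplicity. -/
def shuffles {α : Type*} : List α → List α → List (List α)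
  | [], ys => [ys]
  | xs, [] => [xs]
  | x :: xs, y :: ys =>
      ((shuffles xs (y :: ys)).map fun w => x :: w) ++
        ((shuffles (x :: xs) ys).map fun w => y :: w)
  termination_by xs ys => xs.length + ys.length
  decreasing_by all_goals simp [List.length_cons]

/-- The coordinate iterated integral `X^w_{s,t} = ∫_{s<u_1<…<u_k<t} dγ^{g_1}…dγ^{g_k}`
of a path with derivative density `γ'`, for the word `w = (g_1, …, g_k)`. -/
noncomputable def coordIter {V : Type*} [NormedAddCommGroup V] [NormedSpace ℝ V]
    (γ' : ℝ → V) : List (V →L[ℝ] ℝ) → ℝ → ℝ → ℝ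
  | [], _, _ => 1
  | g :: w, s, t => ∫ u in s..t, g (γ' u) * coordIter γ' w u t

open Set

section Aux

variable {V : Type*} [NormedAddCommGroup V] [NormedSpace ℝ V]

/-- If two densities agree a.e. then all coordinate iterated integrals agree. -/
lemma coordIter_congr {γ₁ γ₂ : ℝ → V} (h : γ₁ =ᵐ[volume] γ₂) :
    ∀ (w : List (V →L[ℝ] ℝ)) (s t : ℝ), coordIter γ₁ w s t = coordIter γ₂ w s t := by
  intro w
  induction w with
  | nil => intro s t; rfl
  | cons g w ih =>
    intro s t
    simp only [coordIter]
    apply intervalIntegral.integral_congr_ae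
    filter_upwards [h] with u hu
    intro _
    rw [hu, ih]

/-- Points of `Ι p q` are within `|q - p|` of both endpoints. -/
lemma abs_sub_le_of_mem_uIoc {p q u : ℝ} (h : u ∈ Set.uIoc p q) :
    |u - p| ≤ |q - p| ∧ |u - q| ≤ |q - p| := by
  rw [Set.mem_uIoc] at h
  have h1 := le_abs_self (q - p)
  have h2 := neg_abs_le (q - p)
  constructor <;> rw [abs_sub_le_iff] <;> constructor <;>
    rcases h with ⟨hh1, hh2⟩ | ⟨hh1, hh2⟩ <;> linarith

/-- A measurable function bounded on an interval is interval integrable there. -/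
lemma intervalIntegrable_of_bound (f : ℝ → ℝ) (hf : Measurable f) (p q c : ℝ)
    (hc : ∀ u ∈ Set.uIoc p q, |f u| ≤ c) : IntervalIntegrable f volume p q := by
  have key : ∀ r r' : ℝ, Set.Ioc r r' ⊆ Set.uIoc p q → IntegrableOn f (Set.Ioc r r') volume := by
    intro r r' hsub
    refine Integrable.mono' (g := fun _ => c) (integrable_const c)
      (hf.aestronglyMeasurable.restrict) ?_
    refine (ae_restrict_iff' measurableSet_Ioc).2 (Filter.Eventually.of_forall ?_)
    intro u hu
    simpa [Real.norm_eq_abs] using hc u (hsub hu)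
  constructor
  · exact key p q (Set.Ioc_subset_uIoc)
  · exact key q p (Set.Ioc_subset_uIoc')

/-- Joint measurability of coordinate iterated integrals in the two endpoints. -/
lemma coordIter_measurable (γ' : ℝ → V) (hγ : StronglyMeasurable γ') :
    ∀ w : List (V →L[ℝ] ℝ), Measurable fun p : ℝ × ℝ => coordIter γ' w p.1 p.2 := by
  intro w
  induction w with
  | nil => simpa [coordIter] using measurable_const
  | cons g w ih =>
    have hg : Measurable fun u : ℝ => g (γ' u) :=
      (g.continuous.comp_stronglyMeasurable hγ).measurable
    have hker : Measurable fun q : (ℝ × ℝ) × ℝ => g (γ' q.2) * coordIter γ' w q.2 q.1.2 :=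
      (hg.comp measurable_snd).mul
        (ih.comp (measurable_snd.prodMk measurable_fst.snd))
    have hind : ∀ (sel : (ℝ × ℝ) → ℝ × ℝ) (hsel : Measurable sel),
        Measurable fun p : ℝ × ℝ =>
          ∫ u, (Set.Ioc (sel p).1 (sel p).2).indicator
            (fun u => g (γ' u) * coordIter γ' w u p.2) u := by
      intro sel hsel
      have hf : Measurable fun q : (ℝ × ℝ) × ℝ =>
          (Set.Ioc (sel q.1).1 (sel q.1).2).indicator
            (fun u => g (γ' u) * coordIter γ' w u q.1.2) q.2 := by
        have : (fun q : (ℝ × ℝ) × ℝ =>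
            (Set.Ioc (sel q.1).1 (sel q.1).2).indicator
              (fun u => g (γ' u) * coordIter γ' w u q.1.2) q.2)
            = fun q => if (sel q.1).1 < q.2 ∧ q.2 ≤ (sel q.1).2 then
                g (γ' q.2) * coordIter γ' w q.2 q.1.2 else 0 := by
          funext q
          by_cases h : (sel q.1).1 < q.2 ∧ q.2 ≤ (sel q.1).2 <;>
            simp [Set.indicator_apply, Set.mem_Ioc, h]
        rw [this]
        refine Measurable.ite ?_ hker measurable_const
        exact MeasurableSet.inter
          (measurableSet_lt ((hsel.comp measurable_fst).fst) measurable_snd)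
          (measurableSet_le measurable_snd ((hsel.comp measurable_fst).snd))
      exact (hf.stronglyMeasurable.integral_prod_right').measurable
    have heq : (fun p : ℝ × ℝ => coordIter γ' (g :: w) p.1 p.2)
        = fun p =>
          (∫ u, (Set.Ioc p.1 p.2).indicator (fun u => g (γ' u) * coordIter γ' w u p.2) u)
          - ∫ u, (Set.Ioc p.2 p.1).indicator (fun u => g (γ' u) * coordIter γ' w u p.2) u := by
      funext p
      simp only [coordIter, intervalIntegral]
      rw [MeasureTheory.integral_indicator measurableSet_Ioc,
        MeasureTheory.integral_indicator measurableSet_Ioc]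
    rw [heq]
    exact (hind id measurable_id).sub
      (hind (fun p => (p.2, p.1)) (measurable_snd.prodMk measurable_fst))

/-- Polynomial bound on coordinate iterated integrals. -/
lemma coordIter_bound (γ' : ℝ → V) (C : ℝ) (hbd : ∀ u, ‖γ' u‖ ≤ C)
    (w : List (V →L[ℝ] ℝ)) :
    ∃ K, 0 ≤ K ∧ ∀ s t : ℝ, |coordIter γ' w s t| ≤ K * (1 + |t - s|) ^ w.length := by
  have hC : 0 ≤ C := (norm_nonneg (γ' 0)).trans (hbd 0)
  induction w with
  | nil => exact ⟨1, zero_le_one, by simp [coordIter]⟩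
  | cons g w ih =>
    obtain ⟨K, hK0, hK⟩ := ih
    refine ⟨(‖g‖ * C + 1) * K, by positivity, ?_⟩
    intro s t
    have hd : (0:ℝ) ≤ |t - s| := abs_nonneg _
    have hgb : ∀ u ∈ Set.uIoc s t,
        ‖g (γ' u) * coordIter γ' w u t‖ ≤ ‖g‖ * C * (K * (1 + |t - s|) ^ w.length) := by
      intro u hu
      have h1 : |g (γ' u)| ≤ ‖g‖ * C := by
        calc |g (γ' u)| = ‖g (γ' u)‖ := (Real.norm_eq_abs _).symm
        _ ≤ ‖g‖ * ‖γ' u‖ := g.le_opNorm _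
        _ ≤ ‖g‖ * C := by
            exact mul_le_mul_of_nonneg_left (hbd u) (norm_nonneg g)
      have htu : |t - u| ≤ |t - s| := by
        have h := (abs_sub_le_of_mem_uIoc hu).2
        calc |t - u| = |u - t| := abs_sub_comm _ _
        _ ≤ |t - s| := h
      have h2 : |coordIter γ' w u t| ≤ K * (1 + |t - s|) ^ w.length := by
        refine (hK u t).trans ?_
        refine mul_le_mul_of_nonneg_left ?_ hK0
        exact pow_le_pow_left₀ (by positivity) (by linarith) _
      calc ‖g (γ' u) * coordIter γ' w u t‖ = |g (γ' u)| * |coordIter γ' w u t| := by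
            rw [Real.norm_eq_abs, abs_mul]
      _ ≤ (‖g‖ * C) * (K * (1 + |t - s|) ^ w.length) := by
            exact mul_le_mul h1 h2 (abs_nonneg _) (by positivity)
    have key : |coordIter γ' (g :: w) s t|
        ≤ ‖g‖ * C * (K * (1 + |t - s|) ^ w.length) * |t - s| := by
      rw [show |coordIter γ' (g :: w) s t| = ‖coordIter γ' (g :: w) s t‖ from
        (Real.norm_eq_abs _).symm]
      simp only [coordIter]
      exact intervalIntegral.norm_integral_le_of_norm_le_const hgb
    refine key.trans ?_
    have hP : (0:ℝ) ≤ (1 + |t - s|) ^ w.length := by positivity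
    have hstep : (1 + |t - s|) ^ w.length * |t - s| ≤ (1 + |t - s|) ^ (w.length + 1) := by
      rw [pow_succ]
      exact mul_le_mul_of_nonneg_left (by linarith) hP
    calc ‖g‖ * C * (K * (1 + |t - s|) ^ w.length) * |t - s|
        = (‖g‖ * C * K) * ((1 + |t - s|) ^ w.length * |t - s|) := by ring
    _ ≤ (‖g‖ * C * K) * (1 + |t - s|) ^ (w.length + 1) := by
        exact mul_le_mul_of_nonneg_left hstep (by positivity)
    _ ≤ ((‖g‖ * C + 1) * K) * (1 + |t - s|) ^ (w.length + 1) := by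
        have : (0:ℝ) ≤ (1 + |t - s|) ^ (w.length + 1) := by positivity
        nlinarith
    _ = (‖g‖ * C + 1) * K * (1 + |t - s|) ^ (List.length (g :: w)) := by
        simp [List.length_cons]

end Aux

section Fubini

/-- Triangle Fubini: swapping the order of integration over `s < u < v < t`. -/
lemma fubini_triangle (H : ℝ → ℝ → ℝ) (hH : Measurable fun p : ℝ × ℝ => H p.1 p.2)
    {s t M : ℝ} (hst : s ≤ t) (hM : ∀ u ∈ Set.Icc s t, ∀ v ∈ Set.Icc s t, |H u v| ≤ M) :
    (∫ u in s..t, ∫ v in u..t, H u v) = ∫ v in s..t, ∫ u in s..v, H u v := by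
  set μ := volume.restrict (Set.Ioc s t) with hμ
  haveI : IsFiniteMeasure μ := by
    constructor
    rw [hμ, Measure.restrict_apply_univ]
    simp [Real.volume_Ioc]
  set f : ℝ → ℝ → ℝ := fun u v => if u < v then H u v else 0 with hf
  have hfm : Measurable (Function.uncurry f) := by
    have : Function.uncurry f = fun p : ℝ × ℝ => if p.1 < p.2 then H p.1 p.2 else 0 := rfl
    rw [this]
    exact Measurable.ite (measurableSet_lt measurable_fst measurable_snd) hH measurable_const
  have hM0 : 0 ≤ M := (abs_nonneg _).trans (hM s ⟨le_rfl, hst⟩ s ⟨le_rfl, hst⟩)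
  have hint : Integrable (Function.uncurry f) (μ.prod μ) := by
    refine Integrable.mono' (g := fun _ => M) (integrable_const M)
      hfm.aestronglyMeasurable ?_
    rw [hμ, Measure.prod_restrict]
    refine (ae_restrict_iff' (measurableSet_Ioc.prod measurableSet_Ioc)).2
      (Filter.Eventually.of_forall ?_)
    rintro ⟨u, v⟩ ⟨hu, hv⟩
    simp only [Function.uncurry, hf, Real.norm_eq_abs]
    split_ifs with h
    · exact hM u (Set.Ioc_subset_Icc_self hu) v (Set.Ioc_subset_Icc_self hv)
    · simpa using hM0
  have swap := MeasureTheory.integral_integral_swap hint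
  -- identify left side
  have hL : (∫ u, ∫ v, f u v ∂μ ∂μ) = ∫ u in s..t, ∫ v in u..t, H u v := by
    rw [intervalIntegral.integral_of_le hst]
    apply setIntegral_congr_fun measurableSet_Ioc
    intro u hu
    have hinner : (fun v => f u v) = (Set.Ioi u).indicator (fun v => H u v) := by
      funext v
      simp [hf, Set.indicator_apply, Set.mem_Ioi]
    calc (∫ v, f u v ∂μ) = ∫ v in Set.Ioc s t, (Set.Ioi u).indicator (fun v => H u v) v := by
          rw [hinner]
    _ = ∫ v in Set.Ioc s t ∩ Set.Ioi u, H u v := setIntegral_indicator measurableSet_Ioi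
    _ = ∫ v in Set.Ioc u t, H u v := by
          have hset : Set.Ioc s t ∩ Set.Ioi u = Set.Ioc u t := by
            ext v
            simp only [Set.mem_inter_iff, Set.mem_Ioc, Set.mem_Ioi]
            constructor
            · rintro ⟨⟨_, h2⟩, h3⟩; exact ⟨h3, h2⟩
            · rintro ⟨h1, h2⟩; exact ⟨⟨lt_of_le_of_lt hu.1.le h1, h2⟩, h1⟩
          rw [hset]
    _ = ∫ v in u..t, H u v := (intervalIntegral.integral_of_le hu.2).symm
  -- identify right side
  have hR : (∫ v, ∫ u, f u v ∂μ ∂μ) = ∫ v in s..t, ∫ u in s..v, H u v := by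
    rw [intervalIntegral.integral_of_le hst]
    apply setIntegral_congr_fun measurableSet_Ioc
    intro v hv
    have hinner : (fun u => f u v) = (Set.Iio v).indicator (fun u => H u v) := by
      funext u
      simp [hf, Set.indicator_apply, Set.mem_Iio]
    calc (∫ u, f u v ∂μ) = ∫ u in Set.Ioc s t, (Set.Iio v).indicator (fun u => H u v) u := by
          rw [hinner]
    _ = ∫ u in Set.Ioc s t ∩ Set.Iio v, H u v := setIntegral_indicator measurableSet_Iio
    _ = ∫ u in Set.Ioo s v, H u v := by
          have hset : Set.Ioc s t ∩ Set.Iio v = Set.Ioo s v := by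
            ext u
            simp only [Set.mem_inter_iff, Set.mem_Ioc, Set.mem_Iio, Set.mem_Ioo]
            constructor
            · rintro ⟨⟨h1, _⟩, h3⟩; exact ⟨h1, h3⟩
            · rintro ⟨h1, h2⟩; exact ⟨⟨h1, le_trans h2.le hv.2⟩, h2⟩
          rw [hset]
    _ = ∫ u in Set.Ioc s v, H u v := (MeasureTheory.integral_Ioc_eq_integral_Ioo).symm
    _ = ∫ u in s..v, H u v := (intervalIntegral.integral_of_le hv.1.le).symm
  rw [← hL, ← hR]
  exact swap

/-- Symmetric integration by parts for primitives. -/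
lemma parts_identity (F G : ℝ → ℝ) (hF : Measurable F) (hG : Measurable G) {s t : ℝ}
    (hst : s ≤ t)
    (hFi : ∀ p q : ℝ, IntervalIntegrable F volume p q)
    (hGi : ∀ p q : ℝ, IntervalIntegrable G volume p q)
    (MF MG : ℝ) (hMF : ∀ u ∈ Set.Icc s t, |F u| ≤ MF) (hMG : ∀ u ∈ Set.Icc s t, |G u| ≤ MG) :
    (∫ u in s..t, F u) * ∫ v in s..t, G v
      = (∫ u in s..t, F u * ∫ v in u..t, G v) + ∫ v in s..t, (∫ u in v..t, F u) * G v := by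
  have hMF0 : 0 ≤ MF := (abs_nonneg _).trans (hMF s ⟨le_rfl, hst⟩)
  have key := fubini_triangle (fun u v => F u * G v)
    ((hF.comp measurable_fst).mul (hG.comp measurable_snd)) hst
    (M := MF * MG) ?bound
  case bound =>
    intro u hu v hv
    rw [abs_mul]
    exact mul_le_mul (hMF u hu) (hMG v hv) (abs_nonneg _) hMF0
  simp only [intervalIntegral.integral_const_mul, intervalIntegral.integral_mul_const] at key
  -- key : ∫ u in s..t, F u * ∫ v in u..t, G v = ∫ v in s..t, (∫ u in s..v, F u) * G v
  have hA : Continuous fun v => ∫ u in v..t, F u := by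
    have h1 : Continuous fun v => ∫ u in t..v, F u :=
      intervalIntegral.continuous_primitive hFi t
    have : (fun v => ∫ u in v..t, F u) = fun v => -∫ u in t..v, F u := by
      funext v; rw [intervalIntegral.integral_symm]
    rw [this]
    exact h1.neg
  have hsplit : ∀ v : ℝ, (∫ u in s..v, F u) = (∫ u in s..t, F u) - ∫ u in v..t, F u := by
    intro v
    rw [← intervalIntegral.integral_add_adjacent_intervals (hFi s v) (hFi v t)]
    ring
  have hint1 : IntervalIntegrable (fun v => (∫ u in s..t, F u) * G v) volume s t :=
    (hGi s t).const_mul _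
  have hint2 : IntervalIntegrable (fun v => (∫ u in v..t, F u) * G v) volume s t :=
    (hGi s t).continuousOn_mul hA.continuousOn
  have expand : (∫ v in s..t, (∫ u in s..v, F u) * G v)
      = (∫ u in s..t, F u) * (∫ v in s..t, G v) - ∫ v in s..t, (∫ u in v..t, F u) * G v := by
    have : (fun v => (∫ u in s..v, F u) * G v)
        = fun v => (∫ u in s..t, F u) * G v - (∫ u in v..t, F u) * G v := by
      funext v; rw [hsplit v]; ring
    rw [this, intervalIntegral.integral_sub hint1 hint2,
      intervalIntegral.integral_const_mul]
  rw [key, expand]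
  ring

end Fubini

section Main

variable {V : Type*} [NormedAddCommGroup V] [NormedSpace ℝ V]
/-- Interval integrability of `u ↦ x(γ' u) * X^w_{u,t}`. -/
lemma int_left (γ' : ℝ → V) (hγ : StronglyMeasurable γ') (C : ℝ) (hbd : ∀ u, ‖γ' u‖ ≤ C) (x : V →L[ℝ] ℝ) (w : List (V →L[ℝ] ℝ)) (t p q : ℝ) :
    IntervalIntegrable (fun u => x (γ' u) * coordIter γ' w u t) volume p q := by
  obtain ⟨K, hK0, hK⟩ := coordIter_bound γ' C hbd w
  apply intervalIntegrable_of_bound _ ?meas p q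
    (‖x‖ * C * (K * (1 + (|t - p| + |q - p|)) ^ w.length))
  case meas =>
    exact ((x.continuous.comp_stronglyMeasurable hγ).measurable).mul
      ((coordIter_measurable γ' hγ w).comp (measurable_id.prodMk measurable_const))
  intro u hu
  have hC : 0 ≤ C := (norm_nonneg (γ' 0)).trans (hbd 0)
  have h1 : |x (γ' u)| ≤ ‖x‖ * C := by
    calc |x (γ' u)| = ‖x (γ' u)‖ := (Real.norm_eq_abs _).symm
    _ ≤ ‖x‖ * ‖γ' u‖ := x.le_opNorm _
    _ ≤ ‖x‖ * C := mul_le_mul_of_nonneg_left (hbd u) (norm_nonneg x)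
  have hup : |u - p| ≤ |q - p| := (abs_sub_le_of_mem_uIoc hu).1
  have htu : |t - u| ≤ |t - p| + |q - p| := by
    calc |t - u| = |(t - p) + (p - u)| := by ring_nf
    _ ≤ |t - p| + |p - u| := abs_add_le _ _
    _ ≤ |t - p| + |q - p| := by rw [abs_sub_comm p u]; linarith
  have h2 : |coordIter γ' w u t| ≤ K * (1 + (|t - p| + |q - p|)) ^ w.length := by
    refine (hK u t).trans ?_
    refine mul_le_mul_of_nonneg_left ?_ hK0
    exact pow_le_pow_left₀ (by positivity) (by linarith) _
  rw [abs_mul]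
  exact mul_le_mul h1 h2 (abs_nonneg _) (by positivity)

/-- Interval integrability of `u ↦ X^w_{s,u} * g(γ' u)`. -/
lemma int_right (γ' : ℝ → V) (hγ : StronglyMeasurable γ') (C : ℝ) (hbd : ∀ u, ‖γ' u‖ ≤ C) (w : List (V →L[ℝ] ℝ)) (g : V →L[ℝ] ℝ) (s p q : ℝ) :
    IntervalIntegrable (fun u => coordIter γ' w s u * g (γ' u)) volume p q := by
  have := int_left γ' hγ C hbd g w s p q
  have heq : (fun u => coordIter γ' w s u * g (γ' u))
      = fun u => g (γ' u) * coordIter γ' (w : List (V →L[ℝ] ℝ)) s u := by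
    funext u; ring
  obtain ⟨K, hK0, hK⟩ := coordIter_bound γ' C hbd w
  apply intervalIntegrable_of_bound _ ?meas p q
    (K * (1 + (|s - p| + |q - p|)) ^ w.length * (‖g‖ * C))
  case meas =>
    exact ((coordIter_measurable γ' hγ w).comp (measurable_const.prodMk measurable_id)).mul
      ((g.continuous.comp_stronglyMeasurable hγ).measurable)
  intro u hu
  have hC : 0 ≤ C := (norm_nonneg (γ' 0)).trans (hbd 0)
  have h1 : |g (γ' u)| ≤ ‖g‖ * C := by
    calc |g (γ' u)| = ‖g (γ' u)‖ := (Real.norm_eq_abs _).symm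
    _ ≤ ‖g‖ * ‖γ' u‖ := g.le_opNorm _
    _ ≤ ‖g‖ * C := mul_le_mul_of_nonneg_left (hbd u) (norm_nonneg g)
  have hup : |u - p| ≤ |q - p| := (abs_sub_le_of_mem_uIoc hu).1
  have hsu : |u - s| ≤ |s - p| + |q - p| := by
    calc |u - s| = |(p - s) + (u - p)| := by ring_nf
    _ ≤ |p - s| + |u - p| := abs_add_le _ _
    _ ≤ |s - p| + |q - p| := by rw [abs_sub_comm p s]; linarith
  have h2 : |coordIter γ' w s u| ≤ K * (1 + (|s - p| + |q - p|)) ^ w.length := by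
    refine (hK s u).trans ?_
    refine mul_le_mul_of_nonneg_left ?_ hK0
    exact pow_le_pow_left₀ (by positivity) (by linarith) _
  rw [abs_mul]
  exact mul_le_mul h2 h1 (abs_nonneg _) (by positivity)

/-- Pulling a sum of coordinate integrals through an integral against `x(γ')` at the front. -/
lemma peel (γ' : ℝ → V) (hγ : StronglyMeasurable γ') (C : ℝ) (hbd : ∀ u, ‖γ' u‖ ≤ C) (x : V →L[ℝ] ℝ) (t : ℝ) (L : List (List (V →L[ℝ] ℝ))) : ∀ s : ℝ,
    IntervalIntegrable (fun u => x (γ' u) * (L.map fun w => coordIter γ' w u t).sum) volume s t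
    ∧ (∫ u in s..t, x (γ' u) * (L.map fun w => coordIter γ' w u t).sum)
      = (L.map fun w => coordIter γ' (x :: w) s t).sum := by
  induction L with
  | nil =>
    intro s
    constructor
    · simpa using intervalIntegrable_const (c := (0:ℝ)) (μ := volume) (a := s) (b := t)
    · simp
  | cons w L ih =>
    intro s
    have h1 : IntervalIntegrable (fun u => x (γ' u) * coordIter γ' w u t) volume s t :=
      int_left γ' hγ C hbd x w t s t
    have h2 := (ih s).1
    have heq : (fun u => x (γ' u) * ((w :: L).map fun w => coordIter γ' w u t).sum)
        = fun u => x (γ' u) * coordIter γ' w u t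
          + x (γ' u) * (L.map fun w => coordIter γ' w u t).sum := by
      funext u; simp [mul_add]
    constructor
    · rw [heq]; exact h1.add h2
    · rw [heq, intervalIntegral.integral_add h1 h2, (ih s).2]
      simp only [List.map_cons, List.sum_cons, coordIter]

/-- Appending a letter corresponds to one more outer integration. -/
lemma coordIter_append (γ' : ℝ → V) (hγ : StronglyMeasurable γ') (C : ℝ) (hbd : ∀ u, ‖γ' u‖ ≤ C) (w : List (V →L[ℝ] ℝ)) : ∀ (g : V →L[ℝ] ℝ) (s t : ℝ), s ≤ t →
    coordIter γ' (w ++ [g]) s t = ∫ u in s..t, coordIter γ' w s u * g (γ' u) := by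
  induction w with
  | nil =>
    intro g s t _
    simp only [List.nil_append, coordIter]
    apply intervalIntegral.integral_congr
    intro u _
    simp [coordIter]
  | cons x w' ih =>
    intro g s t hst
    obtain ⟨K, hK0, hK⟩ := coordIter_bound γ' C hbd w'
    have hC : 0 ≤ C := (norm_nonneg (γ' 0)).trans (hbd 0)
    have step1 : coordIter γ' ((x :: w') ++ [g]) s t
        = ∫ u in s..t, ∫ v in u..t, x (γ' u) * (coordIter γ' w' u v * g (γ' v)) := by
      simp only [List.cons_append, coordIter]
      apply intervalIntegral.integral_congr
      intro u hu
      rw [Set.uIcc_of_le hst] at hu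
      show x (γ' u) * coordIter γ' (w' ++ [g]) u t
          = ∫ v in u..t, x (γ' u) * (coordIter γ' w' u v * g (γ' v))
      rw [ih g u t hu.2, ← intervalIntegral.integral_const_mul]
    have hmeasH : Measurable fun p : ℝ × ℝ =>
        x (γ' p.1) * (coordIter γ' w' p.1 p.2 * g (γ' p.2)) := by
      refine (((x.continuous.comp_stronglyMeasurable hγ).measurable).comp measurable_fst).mul ?_
      exact (coordIter_measurable γ' hγ w').mul
        (((g.continuous.comp_stronglyMeasurable hγ).measurable).comp measurable_snd)
    have hMH : ∀ u ∈ Set.Icc s t, ∀ v ∈ Set.Icc s t,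
        |x (γ' u) * (coordIter γ' w' u v * g (γ' v))|
          ≤ ‖x‖ * C * (K * (1 + |t - s|) ^ w'.length * (‖g‖ * C)) := by
      intro u hu v hv
      have h1 : |x (γ' u)| ≤ ‖x‖ * C := by
        calc |x (γ' u)| = ‖x (γ' u)‖ := (Real.norm_eq_abs _).symm
        _ ≤ ‖x‖ * ‖γ' u‖ := x.le_opNorm _
        _ ≤ ‖x‖ * C := mul_le_mul_of_nonneg_left (hbd u) (norm_nonneg x)
      have h3 : |g (γ' v)| ≤ ‖g‖ * C := by
        calc |g (γ' v)| = ‖g (γ' v)‖ := (Real.norm_eq_abs _).symm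
        _ ≤ ‖g‖ * ‖γ' v‖ := g.le_opNorm _
        _ ≤ ‖g‖ * C := mul_le_mul_of_nonneg_left (hbd v) (norm_nonneg g)
      have hvu : |v - u| ≤ |t - s| := by
        rw [abs_sub_le_iff]
        constructor <;> [skip; skip] <;>
          [linarith [hu.1, hu.2, hv.1, hv.2, le_abs_self (t - s)];
           linarith [hu.1, hu.2, hv.1, hv.2, le_abs_self (t - s)]]
      have h2 : |coordIter γ' w' u v| ≤ K * (1 + |t - s|) ^ w'.length := by
        refine (hK u v).trans ?_
        refine mul_le_mul_of_nonneg_left ?_ hK0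
        exact pow_le_pow_left₀ (by positivity) (by linarith) _
      calc |x (γ' u) * (coordIter γ' w' u v * g (γ' v))|
          = |x (γ' u)| * (|coordIter γ' w' u v| * |g (γ' v)|) := by rw [abs_mul, abs_mul]
      _ ≤ ‖x‖ * C * (K * (1 + |t - s|) ^ w'.length * (‖g‖ * C)) := by
          refine mul_le_mul h1 ?_ (by positivity) (mul_nonneg (norm_nonneg _) hC)
          refine mul_le_mul h2 h3 (abs_nonneg _) ?_
          positivity
    have step2 := fubini_triangle
      (fun u v => x (γ' u) * (coordIter γ' w' u v * g (γ' v))) hmeasH hst hMH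
    have step3 : (∫ v in s..t, ∫ u in s..v, x (γ' u) * (coordIter γ' w' u v * g (γ' v)))
        = ∫ v in s..t, coordIter γ' (x :: w') s v * g (γ' v) := by
      apply intervalIntegral.integral_congr
      intro v _
      have harr : ∀ u : ℝ, x (γ' u) * (coordIter γ' w' u v * g (γ' v))
          = (x (γ' u) * coordIter γ' w' u v) * g (γ' v) := by intro u; ring
      simp only [harr, intervalIntegral.integral_mul_const]
      rfl
    rw [step1, step2, step3]

/-- The shuffle product identity for coordinate iterated integrals. -/
lemma shuffle_product (γ' : ℝ → V) (hγ : StronglyMeasurable γ') (C : ℝ) (hbd : ∀ u, ‖γ' u‖ ≤ C) : ∀ (e f : List (V →L[ℝ] ℝ)) (s t : ℝ), s ≤ t →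
    coordIter γ' e s t * coordIter γ' f s t
      = ((shuffles e f).map fun w => coordIter γ' w s t).sum
  | [], f, s, t, _ => by simp [shuffles, coordIter]
  | (x :: e'), [], s, t, _ => by simp [shuffles, coordIter]
  | (x :: e'), (y :: f'), s, t, hst => by
    have hC : 0 ≤ C := (norm_nonneg (γ' 0)).trans (hbd 0)
    set F : ℝ → ℝ := fun u => x (γ' u) * coordIter γ' e' u t with hFdef
    set G : ℝ → ℝ := fun v => y (γ' v) * coordIter γ' f' v t with hGdef
    obtain ⟨KE, hKE0, hKE⟩ := coordIter_bound γ' C hbd e'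
    obtain ⟨KF, hKF0, hKF⟩ := coordIter_bound γ' C hbd f'
    have hFm : Measurable F :=
      ((x.continuous.comp_stronglyMeasurable hγ).measurable).mul
        ((coordIter_measurable γ' hγ e').comp (measurable_id.prodMk measurable_const))
    have hGm : Measurable G :=
      ((y.continuous.comp_stronglyMeasurable hγ).measurable).mul
        ((coordIter_measurable γ' hγ f').comp (measurable_id.prodMk measurable_const))
    have hFi : ∀ p q : ℝ, IntervalIntegrable F volume p q := fun p q =>
      int_left γ' hγ C hbd x e' t p q
    have hGi : ∀ p q : ℝ, IntervalIntegrable G volume p q := fun p q =>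
      int_left γ' hγ C hbd y f' t p q
    have hbF : ∀ u ∈ Set.Icc s t, |F u| ≤ ‖x‖ * C * (KE * (1 + |t - s|) ^ e'.length) := by
      intro u hu
      have h1 : |x (γ' u)| ≤ ‖x‖ * C := by
        calc |x (γ' u)| = ‖x (γ' u)‖ := (Real.norm_eq_abs _).symm
        _ ≤ ‖x‖ * ‖γ' u‖ := x.le_opNorm _
        _ ≤ ‖x‖ * C := mul_le_mul_of_nonneg_left (hbd u) (norm_nonneg x)
      have htu : |t - u| ≤ |t - s| := by
        rw [abs_sub_le_iff]
        constructor <;> linarith [hu.1, hu.2, le_abs_self (t - s)]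
      have h2 : |coordIter γ' e' u t| ≤ KE * (1 + |t - s|) ^ e'.length := by
        refine (hKE u t).trans ?_
        refine mul_le_mul_of_nonneg_left ?_ hKE0
        exact pow_le_pow_left₀ (by positivity) (by linarith) _
      rw [hFdef, abs_mul]
      exact mul_le_mul h1 h2 (abs_nonneg _) (mul_nonneg (norm_nonneg _) hC)
    have hbG : ∀ v ∈ Set.Icc s t, |G v| ≤ ‖y‖ * C * (KF * (1 + |t - s|) ^ f'.length) := by
      intro v hv
      have h1 : |y (γ' v)| ≤ ‖y‖ * C := by
        calc |y (γ' v)| = ‖y (γ' v)‖ := (Real.norm_eq_abs _).symm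
        _ ≤ ‖y‖ * ‖γ' v‖ := y.le_opNorm _
        _ ≤ ‖y‖ * C := mul_le_mul_of_nonneg_left (hbd v) (norm_nonneg y)
      have htv : |t - v| ≤ |t - s| := by
        rw [abs_sub_le_iff]
        constructor <;> linarith [hv.1, hv.2, le_abs_self (t - s)]
      have h2 : |coordIter γ' f' v t| ≤ KF * (1 + |t - s|) ^ f'.length := by
        refine (hKF v t).trans ?_
        refine mul_le_mul_of_nonneg_left ?_ hKF0
        exact pow_le_pow_left₀ (by positivity) (by linarith) _
      rw [hGdef, abs_mul]
      exact mul_le_mul h1 h2 (abs_nonneg _) (mul_nonneg (norm_nonneg _) hC)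
    have hparts := parts_identity F G hFm hGm hst hFi hGi _ _ hbF hbG
    have hXE : coordIter γ' (x :: e') s t = ∫ u in s..t, F u := rfl
    have hXF : coordIter γ' (y :: f') s t = ∫ v in s..t, G v := rfl
    have term1 : (∫ u in s..t, F u * ∫ v in u..t, G v)
        = ((shuffles e' (y :: f')).map fun w => coordIter γ' (x :: w) s t).sum := by
      have e1 : (∫ u in s..t, F u * ∫ v in u..t, G v)
          = ∫ u in s..t, x (γ' u)
              * ((shuffles e' (y :: f')).map fun w => coordIter γ' w u t).sum := by
        apply intervalIntegral.integral_congr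
        intro u hu
        rw [Set.uIcc_of_le hst] at hu
        show F u * (∫ v in u..t, G v)
            = x (γ' u) * ((shuffles e' (y :: f')).map fun w => coordIter γ' w u t).sum
        have h1 : (∫ v in u..t, G v) = coordIter γ' (y :: f') u t := rfl
        have h2 : F u = x (γ' u) * coordIter γ' e' u t := rfl
        rw [h1, h2, mul_assoc, shuffle_product γ' hγ C hbd e' (y :: f') u t hu.2]
      rw [e1, (peel γ' hγ C hbd x t (shuffles e' (y :: f')) s).2]
    have term2 : (∫ v in s..t, (∫ u in v..t, F u) * G v)
        = ((shuffles (x :: e') f').map fun w => coordIter γ' (y :: w) s t).sum := by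
      have e2 : (∫ v in s..t, (∫ u in v..t, F u) * G v)
          = ∫ v in s..t, y (γ' v)
              * ((shuffles (x :: e') f').map fun w => coordIter γ' w v t).sum := by
        apply intervalIntegral.integral_congr
        intro v hv
        rw [Set.uIcc_of_le hst] at hv
        show (∫ u in v..t, F u) * G v
            = y (γ' v) * ((shuffles (x :: e') f').map fun w => coordIter γ' w v t).sum
        have h1 : (∫ u in v..t, F u) = coordIter γ' (x :: e') v t := rfl
        have h2 : G v = y (γ' v) * coordIter γ' f' v t := rfl
        rw [h1, h2, ← shuffle_product γ' hγ C hbd (x :: e') f' v t hv.2]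
        ring
      rw [e2, (peel γ' hγ C hbd y t (shuffles (x :: e') f') s).2]
    calc coordIter γ' (x :: e') s t * coordIter γ' (y :: f') s t
        = (∫ u in s..t, F u) * ∫ v in s..t, G v := by rw [hXE, hXF]
    _ = (∫ u in s..t, F u * ∫ v in u..t, G v) + ∫ v in s..t, (∫ u in v..t, F u) * G v := hparts
    _ = ((shuffles e' (y :: f')).map fun w => coordIter γ' (x :: w) s t).sum
          + ((shuffles (x :: e') f').map fun w => coordIter γ' (y :: w) s t).sum := by
        rw [term1, term2]
    _ = ((shuffles (x :: e') (y :: f')).map fun w => coordIter γ' w s t).sum := by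
        rw [show shuffles (x :: e') (y :: f')
            = ((shuffles e' (y :: f')).map fun w => x :: w)
              ++ ((shuffles (x :: e') f').map fun w => y :: w) from by rw [shuffles]]
        simp [List.map_append, List.map_map, Function.comp_def]
  termination_by e f => e.length + f.length

/-- Integral of a finite (list-indexed) sum of interval integrable functions. -/
lemma integral_list_sum {α : Type*} (L : List α) (ψ : α → ℝ → ℝ) {p q : ℝ}
    (h : ∀ x ∈ L, IntervalIntegrable (ψ x) volume p q) :
    IntervalIntegrable (fun u => (L.map fun x => ψ x u).sum) volume p q
    ∧ (∫ u in p..q, (L.map fun x => ψ x u).sum) = (L.map fun x => ∫ u in p..q, ψ x u).sum := by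
  induction L with
  | nil =>
    constructor
    · simpa using intervalIntegrable_const (c := (0:ℝ)) (μ := volume) (a := p) (b := q)
    · simp
  | cons x L ih =>
    have h1 : IntervalIntegrable (ψ x) volume p q := h x List.mem_cons_self
    have h2 := (ih fun y hy => h y (List.mem_cons_of_mem x hy)).1
    have heq : (fun u => ((x :: L).map fun y => ψ y u).sum)
        = fun u => ψ x u + (L.map fun y => ψ y u).sum := by
      funext u; simp
    constructor
    · rw [heq]; exact h1.add h2
    · rw [heq, intervalIntegral.integral_add h1 h2,
        (ih fun y hy => h y (List.mem_cons_of_mem x hy)).2]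
      simp

end Main

/-- Let `e` and `f = f̃ ⊗ f_s` (with `f̃ = fTail` and last letter `g = f_s`,
so `f` has length `s ≥ 1`) be words of linear functionals, and `γ` a bounded-variation path
with bounded measurable derivative density `γ'`. Then the double (iterated Stieltjes)
integral `∫∫_{a<u_1<u_2<b} dX^e_{a,u_1} dX^f_{a,u_2}` — i.e.
`∫_a^b X^e_{a,u} · X^{f̃}_{a,u} · f_s(γ'_u) du` — equals the coordinate iterated integral
`X^{(e ⧢ f̃) ⊗ f_s}_{a,b}`.  In particular an iterated integral of coordinate iterated
integrals of `γ` is itself a (linear combination of) coordinate iterated integral(s) of `γ`. -/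
theorem iterated_integral_of_coordIter
    {V : Type*} [NormedAddCommGroup V] [NormedSpace ℝ V]
    (γ' : ℝ → V) (a b : ℝ) (hab : a ≤ b)
    (hmeas : AEStronglyMeasurable γ' volume)
    (C : ℝ) (hbd : ∀ u, ‖γ' u‖ ≤ C)
    (e fTail : List (V →L[ℝ] ℝ)) (g : V →L[ℝ] ℝ) :
    (∫ u in a..b, coordIter γ' e a u * (coordIter γ' fTail a u * g (γ' u))) =
      ((shuffles e fTail).map fun w => coordIter γ' (w ++ [g]) a b).sum := by
  classical
  have hC : 0 ≤ C := (norm_nonneg (γ' 0)).trans (hbd 0)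
  set γ₀ : ℝ → V := hmeas.mk γ' with hγ₀def
  have hγ₀ : StronglyMeasurable γ₀ := hmeas.stronglyMeasurable_mk
  have hae : γ' =ᵐ[volume] γ₀ := hmeas.ae_eq_mk
  set γ₁ : ℝ → V := fun u => if ‖γ₀ u‖ ≤ C then γ₀ u else 0 with hγ₁def
  have hγ₁ : StronglyMeasurable γ₁ := by
    refine StronglyMeasurable.ite ?_ hγ₀ stronglyMeasurable_const
    exact measurableSet_le hγ₀.norm.measurable measurable_const
  have hbd₁ : ∀ u, ‖γ₁ u‖ ≤ C := by
    intro u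
    by_cases h : ‖γ₀ u‖ ≤ C <;> simp [hγ₁def, h, hC]
  have hae₁ : γ' =ᵐ[volume] γ₁ := by
    filter_upwards [hae] with u hu
    have hh : ‖γ₀ u‖ ≤ C := by rw [← hu]; exact hbd u
    simp only [hγ₁def, hh, if_true]
    exact hu
  -- replace γ' by γ₁ everywhere
  have hRHS : ((shuffles e fTail).map fun w => coordIter γ' (w ++ [g]) a b).sum
      = ((shuffles e fTail).map fun w => coordIter γ₁ (w ++ [g]) a b).sum := by
    congr 1
    exact List.map_congr_left fun w _ => coordIter_congr hae₁ _ _ _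
  have hLHS : (∫ u in a..b, coordIter γ' e a u * (coordIter γ' fTail a u * g (γ' u)))
      = ∫ u in a..b, coordIter γ₁ e a u * (coordIter γ₁ fTail a u * g (γ₁ u)) := by
    apply intervalIntegral.integral_congr_ae
    filter_upwards [hae₁] with u hu
    intro _
    rw [hu, coordIter_congr hae₁ e, coordIter_congr hae₁ fTail]
  rw [hLHS, hRHS]
  -- now carry out the main computation with the measurable pointwise-bounded density γ₁
  have step1 : (∫ u in a..b, coordIter γ₁ e a u * (coordIter γ₁ fTail a u * g (γ₁ u)))
      = ∫ u in a..b,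
          ((shuffles e fTail).map fun w => coordIter γ₁ w a u * g (γ₁ u)).sum := by
    apply intervalIntegral.integral_congr
    intro u hu
    rw [Set.uIcc_of_le hab] at hu
    calc coordIter γ₁ e a u * (coordIter γ₁ fTail a u * g (γ₁ u))
        = (coordIter γ₁ e a u * coordIter γ₁ fTail a u) * g (γ₁ u) := by ring
    _ = ((shuffles e fTail).map fun w => coordIter γ₁ w a u).sum * g (γ₁ u) := by
        rw [shuffle_product γ₁ hγ₁ C hbd₁ e fTail a u hu.1]
    _ = ((shuffles e fTail).map fun w => coordIter γ₁ w a u * g (γ₁ u)).sum := by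
        rw [← List.sum_map_mul_right]
  have step2 := integral_list_sum (shuffles e fTail)
    (fun w u => coordIter γ₁ w a u * g (γ₁ u)) (p := a) (q := b)
    (fun w _ => int_right γ₁ hγ₁ C hbd₁ w g a a b)
  rw [step1, step2.2]
  congr 1
  refine List.map_congr_left fun w _ => ?_
  exact (coordIter_append γ₁ hγ₁ C hbd₁ w g a b hab).symm
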